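/- arXiv:2412.03383 — 3 statements merged into one kernel-verified Lean document; each statement's English description precedes it below -/
import Mathlib

section
/- For all real numbers x, y with 0 ≤ x ≤ 1 and -x ≤ y ≤ x, the function f(x,y) := sqrt(4(1-x)(3·sqrt(x+y) + 2·sqrt(x-y))² + (2x + 5y + 2)²) satisfies f(x,y) ≤ (5/2)·sqrt(11/2) + 8·sqrt(2/11)·y, with equality if and only if x = 9/16 and y = 0. -/
/-- `f(x,y) = sqrt(4(1-x)(3√(x+y)+2√(x-y))² + (2x+5y+2)²)`. -/
noncomputable def f (x y : ℝ) : ℝ :=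
  Real.sqrt (4*(1-x)*(3*Real.sqrt (x+y) + 2*Real.sqrt (x-y))^2 + (2*x+5*y+2)^2)

lemma certId (a b : ℝ) :
    (55+16*(a^2-b^2))^2/88
      - (4*(1-(a^2+b^2)/2)*(3*a+2*b)^2 + ((a^2+b^2)+5*(a^2-b^2)/2+2)^2)
    = (1/216)*(81-40*a^2-64*a*b-40*b^2)^2
      + (1/1766556)*(1487*a^2-2200*a*b+713*b^2)^2
      + (4300/4461)*(a*b-b^2)^2
      + 4*(a*b)*(a-b)^2 := by
  ring

lemma aux_le (a b : ℝ) (hab : 0 ≤ a*b) :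
    4*(1-(a^2+b^2)/2)*(3*a+2*b)^2 + ((a^2+b^2)+5*(a^2-b^2)/2+2)^2
      ≤ (55+16*(a^2-b^2))^2/88 := by
  have h := certId a b
  linarith [sq_nonneg (81-40*a^2-64*a*b-40*b^2),
    sq_nonneg (1487*a^2-2200*a*b+713*b^2), sq_nonneg (a*b-b^2),
    mul_nonneg hab (sq_nonneg (a-b))]

lemma aux_eq (a b : ℝ) (ha : 0 ≤ a) (hb : 0 ≤ b)
    (h : 4*(1-(a^2+b^2)/2)*(3*a+2*b)^2 + ((a^2+b^2)+5*(a^2-b^2)/2+2)^2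
      = (55+16*(a^2-b^2))^2/88) :
    a = 3/4 ∧ b = 3/4 := by
  have hid := certId a b
  have n1 := sq_nonneg (81-40*a^2-64*a*b-40*b^2)
  have n2 := sq_nonneg (1487*a^2-2200*a*b+713*b^2)
  have n3 := sq_nonneg (a*b-b^2)
  have n4 := mul_nonneg (mul_nonneg ha hb) (sq_nonneg (a-b))
  have e1 : (81-40*a^2-64*a*b-40*b^2)^2 = 0 :=
    le_antisymm (by linarith) (sq_nonneg _)
  have e3 : (a*b-b^2)^2 = 0 :=
    le_antisymm (by linarith) (sq_nonneg _)
  have e2 : (1487*a^2-2200*a*b+713*b^2)^2 = 0 :=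
    le_antisymm (by linarith) (sq_nonneg _)
  have f1 : 81-40*a^2-64*a*b-40*b^2 = 0 := by
    exact (pow_eq_zero_iff two_ne_zero).mp e1
  have f3 : b*(a-b) = 0 := by
    have := (pow_eq_zero_iff (two_ne_zero)).mp e3
    linarith [this]
  have f2 : 1487*a^2-2200*a*b+713*b^2 = 0 := by
    exact (pow_eq_zero_iff two_ne_zero).mp e2
  rcases mul_eq_zero.mp f3 with hb0 | hab'
  · exfalso
    rw [hb0] at f2
    have ha2' : a^2 = 0 := by linarith
    have ha0 : a = 0 := (pow_eq_zero_iff two_ne_zero).mp ha2'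
    rw [ha0, hb0] at f1; norm_num at f1
  · have hab2 : a = b := by linarith
    rw [← hab2] at f1
    have h9 : a^2 = 9/16 := by linear_combination (-1/144) * f1
    have : (a - 3/4)*(a + 3/4) = 0 := by linear_combination h9
    rcases mul_eq_zero.mp this with h' | h'
    · constructor <;> linarith
    · exfalso; linarith

theorem stmt0 (x y : ℝ) (hx0 : 0 ≤ x) (hx1 : x ≤ 1) (hy1 : -x ≤ y) (hy2 : y ≤ x) :
    f x y ≤ (5/2) * Real.sqrt (11/2) + 8 * Real.sqrt (2/11) * y ∧
    (f x y = (5/2) * Real.sqrt (11/2) + 8 * Real.sqrt (2/11) * y ↔ x = 9/16 ∧ y = 0) := by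
  have hxy1 : (0:ℝ) ≤ x + y := by linarith
  have hxy2 : (0:ℝ) ≤ x - y := by linarith
  set a := Real.sqrt (x + y) with ha_def
  set b := Real.sqrt (x - y) with hb_def
  have ha : 0 ≤ a := Real.sqrt_nonneg _
  have hb : 0 ≤ b := Real.sqrt_nonneg _
  have ha2 : a ^ 2 = x + y := Real.sq_sqrt hxy1
  have hb2 : b ^ 2 = x - y := Real.sq_sqrt hxy2
  have hx' : x = (a^2 + b^2)/2 := by linarith
  have hy' : y = (a^2 - b^2)/2 := by linarith
  have hs11 : Real.sqrt (11/2) = Real.sqrt 22 * (1/2) := by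
    rw [show (11/2:ℝ) = 22 * (1/2)^2 by norm_num,
      Real.sqrt_mul (by norm_num), Real.sqrt_sq (by norm_num)]
  have hs2 : Real.sqrt (2/11) = Real.sqrt 22 * (1/11) := by
    rw [show (2/11:ℝ) = 22 * (1/11)^2 by norm_num,
      Real.sqrt_mul (by norm_num), Real.sqrt_sq (by norm_num)]
  have h22 : Real.sqrt 22 ^ 2 = 22 := Real.sq_sqrt (by norm_num)
  have hs22 : (0:ℝ) ≤ Real.sqrt 22 := Real.sqrt_nonneg _
  have hR : (5/2) * Real.sqrt (11/2) + 8 * Real.sqrt (2/11) * y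
      = Real.sqrt 22 * (55 + 32*y) / 44 := by
    rw [hs11, hs2]; ring
  have hRnn : 0 ≤ Real.sqrt 22 * (55 + 32*y) / 44 :=
    div_nonneg (mul_nonneg hs22 (by linarith)) (by norm_num)
  have hRsq : (Real.sqrt 22 * (55 + 32*y) / 44) ^ 2 = (55 + 32*y)^2 / 88 := by
    rw [div_pow, mul_pow, h22]; ring
  have hfval : f x y = Real.sqrt (4*(1-x)*(3*a + 2*b)^2 + (2*x+5*y+2)^2) := rfl
  have hEnn : 0 ≤ 4*(1-x)*(3*a + 2*b)^2 + (2*x+5*y+2)^2 :=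
    add_nonneg (mul_nonneg (by linarith) (sq_nonneg _)) (sq_nonneg _)
  have key : 4*(1-x)*(3*a + 2*b)^2 + (2*x+5*y+2)^2 ≤ (55 + 32*y)^2 / 88 := by
    have h := aux_le a b (mul_nonneg ha hb)
    have e1 : 4*(1-x)*(3*a + 2*b)^2 + (2*x+5*y+2)^2
        = 4*(1-(a^2+b^2)/2)*(3*a+2*b)^2 + ((a^2+b^2)+5*(a^2-b^2)/2+2)^2 := by
      rw [hx', hy']; ring
    have e2 : (55 + 32*y)^2/88 = (55+16*(a^2-b^2))^2/88 := by rw [hy']; ring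
    rw [e1, e2]; exact h
  have hle : f x y ≤ (5/2) * Real.sqrt (11/2) + 8 * Real.sqrt (2/11) * y := by
    rw [hfval, hR]
    calc Real.sqrt (4*(1-x)*(3*a + 2*b)^2 + (2*x+5*y+2)^2)
        ≤ Real.sqrt ((Real.sqrt 22 * (55 + 32*y) / 44) ^ 2) := by
          apply Real.sqrt_le_sqrt; rw [hRsq]; exact key
      _ = Real.sqrt 22 * (55 + 32*y) / 44 := Real.sqrt_sq hRnn
  refine ⟨hle, ?_, ?_⟩
  · intro h
    rw [hfval, hR] at h
    have hE : 4*(1-x)*(3*a + 2*b)^2 + (2*x+5*y+2)^2 = (55 + 32*y)^2 / 88 := by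
      have h2 := Real.sq_sqrt hEnn
      rw [h] at h2
      rw [← h2, hRsq]
    have hE' : 4*(1-(a^2+b^2)/2)*(3*a+2*b)^2 + ((a^2+b^2)+5*(a^2-b^2)/2+2)^2
        = (55+16*(a^2-b^2))^2/88 := by
      rw [hx', hy'] at hE; linear_combination hE
    obtain ⟨ea, eb⟩ := aux_eq a b ha hb hE'
    rw [ea] at ha2
    rw [eb] at hb2
    constructor <;> linarith
  · rintro ⟨hx9, hy0⟩
    subst hx9; subst hy0
    have h34 : a = 3/4 := by
      rw [ha_def, show (9:ℝ)/16 + 0 = (3/4)^2 by norm_num, Real.sqrt_sq (by norm_num)]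
    have h34' : b = 3/4 := by
      rw [hb_def, show (9:ℝ)/16 - 0 = (3/4)^2 by norm_num, Real.sqrt_sq (by norm_num)]
    rw [hfval, hR, h34, h34']
    have harg : 4*(1-(9:ℝ)/16)*(3*(3/4) + 2*(3/4))^2 + (2*(9/16)+5*0+2)^2
        = 22 * (5/4)^2 := by norm_num
    rw [harg, Real.sqrt_mul (by norm_num), Real.sqrt_sq (by norm_num)]
    ring
end

section
/- For all real numbers x, y with 0 ≤ x ≤ 1 and -x ≤ y ≤ x, the function f(x,y) := sqrt(4(1-x)(3·sqrt(x+y) + 2·sqrt(x-y))² + (2x + 5y + 2)²) satisfies f(x,y) ≤ αx + βy + γ, where α = 5/2 - 43/(2·sqrt 41), β = 9/2 - 13/(2·sqrt 41), γ = 2 + 28/sqrt 41. Equality holds if and only if (x,y) = (1,1) or (x,y) = ((2003 + 27·sqrt 41)/3524, (-1039 + 81·sqrt 41)/3524). -/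
noncomputable def α : ℝ := 5/2 - 43/(2*Real.sqrt 41)
noncomputable def β : ℝ := 9/2 - 13/(2*Real.sqrt 41)
noncomputable def γ : ℝ := 2 + 28/Real.sqrt 41

set_option maxHeartbeats 8000000 in
/-- Key SOS-type identity, purely algebraic in `s, t, r` with `r^2 = 41`. -/
lemma keyid (s t r : ℝ) (hr : r^2 = 41) :
    ((7/2 - 14/41*r)*s^2 + (-1 - 15/82*r)*t^2 + (2 + 28/41*r))^2
      - (2*(2-s^2-t^2)*(3*s+2*t)^2 + ((7*s^2-3*t^2+4)/2)^2)
    = ((20117*r - 111889)/18329818176)*(2-s^2-t^2)*((1521 - 27*r)*s - (288+120*r)*t)^2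
      + (196/41 + 28/41*r)*(s^2 + (123/56 - 9/56*r)*s*t + (2 - 1/7*r)*t^2 - 2)^2
      + (-27/7 + 225/287*r)*(s*t - (1/4 + 1/12*r)*t^2)^2 := by
  linear_combination ((784/1681) + (-803728066/1304726641)*t^2 + (-1005850/31822601)*t^2*r + (45040594297/146129383792)*t^4 + (-12750729/3564131312)*t^4*r + (12958584/31822601)*s*t + (-905265/63645202)*s*t*r + (158437593/445516414)*s*t^3 + (-21604941/891032828)*s*t^3*r + (-11573646377/41751252512)*s^2 + (-1629477/1018323232)*s^2*r + (334391616635/584517535168)*s^2*t^2 + (-14759425/14256525248)*s^2*t^2*r + (-6479292/31822601)*s^3*t + (905265/127290404)*s^3*t*r + (1837482793/83502505024)*s^4 + (1629477/2036646464)*s^4*r) * hr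

set_option maxHeartbeats 8000000 in
theorem stmt1 (x y : ℝ) (hx0 : 0 ≤ x) (hx1 : x ≤ 1) (hy1 : -x ≤ y) (hy2 : y ≤ x) :
    f x y ≤ α * x + β * y + γ ∧
    (f x y = α * x + β * y + γ ↔
      (x = 1 ∧ y = 1) ∨
      (x = (2003 + 27*Real.sqrt 41)/3524 ∧ y = (-1039 + 81*Real.sqrt 41)/3524)) := by
  set r : ℝ := Real.sqrt 41 with hrdef
  have hr : r^2 = 41 := Real.sq_sqrt (by norm_num)
  have hr0 : 0 ≤ r := Real.sqrt_nonneg 41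
  have hr6 : 6 < r := by nlinarith
  have hr7 : r < 7 := by nlinarith
  set s : ℝ := Real.sqrt (x+y) with hsdef
  set t : ℝ := Real.sqrt (x-y) with htdef
  have hs0 : 0 ≤ s := Real.sqrt_nonneg _
  have ht0 : 0 ≤ t := Real.sqrt_nonneg _
  have hs : s^2 = x + y := Real.sq_sqrt (by linarith)
  have ht : t^2 = x - y := Real.sq_sqrt (by linarith)
  -- α, β, γ in polynomial form
  have hrpos : (0:ℝ) < r := by linarith
  have e1 : (43:ℝ)/(2*r) = 43/82*r := by
    rw [div_eq_iff (by positivity)]; linear_combination (-43/41)*hr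
  have e2 : (13:ℝ)/(2*r) = 13/82*r := by
    rw [div_eq_iff (by positivity)]; linear_combination (-13/41)*hr
  have e3 : (28:ℝ)/r = 28/41*r := by
    rw [div_eq_iff (by positivity)]; linear_combination (-28/41)*hr
  have hL : α * x + β * y + γ
      = (7/2 - 14/41*r)*s^2 + (-1 - 15/82*r)*t^2 + (2 + 28/41*r) := by
    unfold α β γ
    rw [← hrdef, e1, e2, e3, hs, ht]; ring
  -- the radicand in s,t form
  have hF : 4*(1-x)*(3*s + 2*t)^2 + (2*x+5*y+2)^2
      = 2*(2-s^2-t^2)*(3*s+2*t)^2 + ((7*s^2-3*t^2+4)/2)^2 := by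
    rw [hs, ht]; ring
  have hfdef : f x y = Real.sqrt (4*(1-x)*(3*s + 2*t)^2 + (2*x+5*y+2)^2) := by
    unfold f; rw [← hsdef, ← htdef]
  -- positivity facts
  have hE1 : (0:ℝ) < (20117*r - 111889)/18329818176 :=
    div_pos (by linarith) (by norm_num)
  have hd1 : (0:ℝ) < 196/41 + 28/41*r := by linarith
  have hd2 : (0:ℝ) < -27/7 + 225/287*r := by linarith
  have h2x : 0 ≤ 2 - s^2 - t^2 := by rw [hs, ht]; linarith
  have key := keyid s t r hr
  obtain ⟨Ls, hLs⟩ : ∃ v : ℝ,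
      (7/2 - 14/41*r)*s^2 + (-1 - 15/82*r)*t^2 + (2 + 28/41*r) = v := ⟨_, rfl⟩
  obtain ⟨A, hA⟩ : ∃ v : ℝ,
      ((20117*r - 111889)/18329818176)*(2-s^2-t^2)*((1521 - 27*r)*s - (288+120*r)*t)^2 = v :=
    ⟨_, rfl⟩
  obtain ⟨B, hB⟩ : ∃ v : ℝ,
      (196/41 + 28/41*r)*(s^2 + (123/56 - 9/56*r)*s*t + (2 - 1/7*r)*t^2 - 2)^2 = v := ⟨_, rfl⟩
  obtain ⟨Cc, hC⟩ : ∃ v : ℝ,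
      (-27/7 + 225/287*r)*(s*t - (1/4 + 1/12*r)*t^2)^2 = v := ⟨_, rfl⟩
  rw [hLs, hA, hB, hC] at key
  rw [hLs] at hL
  have hA0 : 0 ≤ A := by
    rw [← hA]
    exact mul_nonneg (mul_nonneg (le_of_lt hE1) h2x) (sq_nonneg _)
  have hB0 : 0 ≤ B := by
    rw [← hB]; exact mul_nonneg (le_of_lt hd1) (sq_nonneg _)
  have hC0 : 0 ≤ Cc := by
    rw [← hC]; exact mul_nonneg (le_of_lt hd2) (sq_nonneg _)
  have hFsq : 4*(1-x)*(3*s + 2*t)^2 + (2*x+5*y+2)^2 = Ls^2 - (A + B + Cc) := by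
    rw [hF]; linear_combination -key
  clear key
  have hL0 : 0 ≤ Ls := by
    rw [← hLs]
    have ht2 : t^2 ≤ 2 := by rw [ht]; linarith
    have p1 : 0 ≤ (7/2 - 14/41*r)*s^2 :=
      mul_nonneg (by linarith) (sq_nonneg s)
    have p2 : 0 ≤ (1+15/82*r)*(2-t^2) :=
      mul_nonneg (by linarith) (by linarith)
    linarith [p1, p2, hr0]
  have hF0 : 0 ≤ 4*(1-x)*(3*s + 2*t)^2 + (2*x+5*y+2)^2 := by
    have h9 : 0 ≤ 4*(1-x)*(3*s + 2*t)^2 :=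
      mul_nonneg (by linarith) (sq_nonneg _)
    linarith [sq_nonneg (2*x+5*y+2)]
  constructor
  · -- inequality
    rw [hfdef, hL]
    calc Real.sqrt (4*(1-x)*(3*s + 2*t)^2 + (2*x+5*y+2)^2)
        ≤ Real.sqrt (Ls^2) := by
          apply Real.sqrt_le_sqrt; rw [hFsq]; linarith
      _ = Ls := by rw [Real.sqrt_sq hL0]
  · constructor
    · -- forward: equality implies the two points
      intro heq
      rw [hfdef, hL] at heq
      have hFL : 4*(1-x)*(3*s + 2*t)^2 + (2*x+5*y+2)^2 = Ls^2 := by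
        have h2 := congrArg (·^2) heq
        simpa [Real.sq_sqrt hF0] using h2
      rw [hFsq] at hFL
      have hBz : B = 0 := by linarith
      have hCz : Cc = 0 := by linarith
      rw [hBz] at hB
      rw [hCz] at hC
      have hq1 : s^2 + (123/56 - 9/56*r)*s*t + (2 - 1/7*r)*t^2 - 2 = 0 := by
        have h3 := (mul_eq_zero.mp hB).resolve_left (by positivity)
        exact pow_eq_zero_iff (n := 2) (by norm_num) |>.mp h3
      have hq2 : s*t - (1/4 + 1/12*r)*t^2 = 0 := by
        have h3 := (mul_eq_zero.mp hC).resolve_left (by positivity)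
        exact pow_eq_zero_iff (n := 2) (by norm_num) |>.mp h3
      have hq2' : t * (s - (1/4 + 1/12*r)*t) = 0 := by linear_combination hq2
      rcases mul_eq_zero.mp hq2' with htz | hpz
      · -- t = 0 : point (1,1)
        left
        rw [htz] at hq1 ht
        have hs2 : s^2 = 2 := by linear_combination hq1
        have hxy : x + y = 2 := by rw [← hs]; linarith
        have hxy2 : x - y = 0 := by rw [← ht]; ring
        constructor <;> linarith
      · -- s = (1/4+1/12 r) t : point 2
        right
        have hp : s = (1/4 + 1/12*r)*t := by linarith
        have hxmy : x - y = (1521 - 27*r)/1762 := by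
          linear_combination ((-1)) * ht + ((1521/3524) + (-27/3524)*r) * hq1 + ((-106587/98672)*t + (735/14096)*t*r + (-1521/3524)*s + (27/3524)*s*r) * hp + ((1283/394688)*t^2 + (-117/197344)*s*t) * hr
        have hxpy : x + y = (241 + 27*r)/881 := by
          linear_combination ((-1)) * hs + ((241/1762) + (27/1762)*r) * hq1 + ((-222/6167)*t + (348/6167)*t*r + (1521/1762)*s + (-27/1762)*s*r) * hp + ((85/12334)*t^2 + (117/98672)*s*t) * hr
        constructor
        · linear_combination (1/2)*hxpy + (1/2)*hxmy
        · linear_combination (1/2)*hxpy + (-1/2)*hxmy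
    · -- backward: the two points give equality
      intro hpt
      have hAz : A = 0 ∧ B = 0 ∧ Cc = 0 := by
        rcases hpt with ⟨hx, hy⟩ | ⟨hx, hy⟩
        · -- point (1,1)
          have ht2 : t^2 = 0 := by rw [ht, hx, hy]; ring
          have htz : t = 0 :=
            pow_eq_zero_iff (n := 2) (by norm_num) |>.mp ht2
          have hs2 : s^2 = 2 := by rw [hs, hx, hy]; norm_num
          refine ⟨?_, ?_, ?_⟩
          · rw [← hA, hs2, ht2]; ring
          · rw [← hB, htz]
            have h4 : s^2 + (123/56 - 9/56*r)*s*0 + (2 - 1/7*r)*0^2 - 2 = 0 := by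
              rw [hs2]; ring
            rw [h4]; ring
          · rw [← hC, htz]; ring
        · -- point 2
          have hst : s * t = (144 + 60*r)/881 := by
            rw [hsdef, htdef, ← Real.sqrt_mul (by linarith)]
            rw [show (x+y)*(x-y) = ((144 + 60*r)/881)^2 by
              linear_combination ((2003/3524) + (27/3524)*r + (1)*x) * hx + ((1039/3524) + (-81/3524)*r + (-1)*y) * hy + ((-9/1762)) * hr]
            exact Real.sqrt_sq (by positivity)
          have hq1z : s^2 + (123/56 - 9/56*r)*s*t + (2 - 1/7*r)*t^2 - 2 = 0 := by
            linear_combination ((3) + (-1/7)*r) * hx + ((-1) + (1/7)*r) * hy + ((1)) * hs + ((2) + (-1/7)*r) * ht + ((123/56) + (-9/56)*r) * hst + ((-54/6167)) * hr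
          have hq2z : s*t - (1/4 + 1/12*r)*t^2 = 0 := by
            linear_combination ((-1/4) + (-1/12)*r) * hx + ((1/4) + (1/12)*r) * hy + ((-1/4) + (-1/12)*r) * ht + ((1)) * hst + ((9/7048)) * hr
          have hut : ((1521 - 27*r)*s - (288+120*r)*t) * t = 0 := by
            linear_combination ((-288) + (-120)*r) * hx + ((288) + (120)*r) * hy + ((-288) + (-120)*r) * ht + ((1521) + (-27)*r) * hst
          have htne : t ≠ 0 := by
            intro h
            rw [h] at ht
            have h5 : x - y = 0 := by rw [← ht]; ring
            rw [hx, hy] at h5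
            linarith
          have huz : (1521 - 27*r)*s - (288+120*r)*t = 0 :=
            (mul_eq_zero.mp hut).resolve_right htne
          refine ⟨?_, ?_, ?_⟩
          · rw [← hA, huz]; ring
          · rw [← hB, hq1z]; ring
          · rw [← hC, hq2z]; ring
      have hFL : 4*(1-x)*(3*s + 2*t)^2 + (2*x+5*y+2)^2 = Ls^2 := by
        rw [hFsq, hAz.1, hAz.2.1, hAz.2.2]; ring
      rw [hfdef, hL, hFL, Real.sqrt_sq hL0]
end

section
/- Every symmetric state of two qubits admits a real Schmidt-type canonical form: for any unit vector |Φ⟩ in the symmetric subspace Sym²(ℂ²) of ℂ²⊗ℂ², there exist a 2×2 unitary U and ξ ∈ [0, π/2] such that (U⊗U)|Φ⟩ = cos(ξ/2)|00⟩ + sin(ξ/2)|11⟩. -/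
open Complex

private lemma normHelper (a b d x y : ℂ) (s : ℝ) (hx : ¬(x = 0 ∧ y = 0))
    (h1 : a * (starRingEnd ℂ) x + b * (starRingEnd ℂ) y = (s:ℂ) * x)
    (h2 : b * (starRingEnd ℂ) x + d * (starRingEnd ℂ) y = (s:ℂ) * y) :
    ∃ α β : ℂ, (α * (starRingEnd ℂ) α + β * (starRingEnd ℂ) β = 1) ∧
      (a * (starRingEnd ℂ) α + b * (starRingEnd ℂ) β = (s:ℂ) * α) ∧
      (b * (starRingEnd ℂ) α + d * (starRingEnd ℂ) β = (s:ℂ) * β) := by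
  set ν : ℝ := Real.sqrt (normSq x + normSq y) with hν
  have hpos : 0 < normSq x + normSq y := by
    rcases not_and_or.1 hx with h | h
    · have := normSq_pos.2 h
      nlinarith [normSq_nonneg y]
    · have := normSq_pos.2 h
      nlinarith [normSq_nonneg x]
  have hν0 : 0 < ν := Real.sqrt_pos.2 hpos
  have hν2 : (ν:ℝ)^2 = normSq x + normSq y := Real.sq_sqrt hpos.le
  have hνC : ((ν:ℂ)) ≠ 0 := by exact_mod_cast hν0.ne'
  refine ⟨x / ν, y / ν, ?_, ?_, ?_⟩
  · have hxy2 : x * (starRingEnd ℂ) x + y * (starRingEnd ℂ) y = ((ν:ℂ))^2 := by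
      rw [Complex.mul_conj, Complex.mul_conj]
      norm_cast
      exact hν2.symm
    simp only [map_div₀, Complex.conj_ofReal]
    field_simp
    linear_combination hxy2
  · simp only [map_div₀, Complex.conj_ofReal]
    field_simp
    linear_combination h1
  · simp only [map_div₀, Complex.conj_ofReal]
    field_simp
    linear_combination h2

private theorem key (Φ : Fin 2 × Fin 2 → ℂ) (a b d α β γ δ : ℂ) (s t : ℝ)
    (ha : Φ (0,0) = a) (hb : Φ (0,1) = b) (hb' : Φ (1,0) = b) (hd : Φ (1,1) = d)
    (n1 : α * (starRingEnd ℂ) α + β * (starRingEnd ℂ) β = 1)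
    (n2 : γ * (starRingEnd ℂ) γ + δ * (starRingEnd ℂ) δ = 1)
    (o12 : α * (starRingEnd ℂ) γ + β * (starRingEnd ℂ) δ = 0)
    (e1 : a * (starRingEnd ℂ) α + b * (starRingEnd ℂ) β = (s : ℂ) * α)
    (e2 : b * (starRingEnd ℂ) α + d * (starRingEnd ℂ) β = (s : ℂ) * β)
    (e3 : a * (starRingEnd ℂ) γ + b * (starRingEnd ℂ) δ = (t : ℂ) * γ)
    (e4 : b * (starRingEnd ℂ) γ + d * (starRingEnd ℂ) δ = (t : ℂ) * δ)
    (ht : 0 ≤ t) (hts : t ≤ s) (hsum : s^2 + t^2 = 1) :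
    ∃ U : Matrix (Fin 2) (Fin 2) ℂ, U ∈ Matrix.unitaryGroup (Fin 2) ℂ ∧
      ∃ ξ : ℝ, 0 ≤ ξ ∧ ξ ≤ Real.pi/2 ∧
        ∀ i j : Fin 2,
          (∑ k : Fin 2, ∑ l : Fin 2, U i k * U j l * Φ (k, l)) =
            if i = 0 ∧ j = 0 then (Real.cos (ξ/2) : ℂ)
            else if i = 1 ∧ j = 1 then (Real.sin (ξ/2) : ℂ)
            else 0 := by
  have hs : 0 ≤ s := le_trans ht hts
  have ht1 : t ≤ 1 := by nlinarith
  have ht1' : (-1:ℝ) ≤ t := by linarith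
  have o21 : (starRingEnd ℂ) α * γ + (starRingEnd ℂ) β * δ = 0 := by
    have := congrArg (starRingEnd ℂ) o12
    simpa using this
  have ha0 : Φ 0 = a := ha
  have hd1 : Φ 1 = d := hd
  refine ⟨![![(starRingEnd ℂ) α, (starRingEnd ℂ) β], ![(starRingEnd ℂ) γ, (starRingEnd ℂ) δ]], ?_, 2 * Real.arcsin t, ?_, ?_, ?_⟩
  · change Matrix.of ![![(starRingEnd ℂ) α, (starRingEnd ℂ) β], ![(starRingEnd ℂ) γ, (starRingEnd ℂ) δ]] ∈ _
    rw [Matrix.mem_unitaryGroup_iff]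
    ext i j
    fin_cases i <;> fin_cases j <;>
      simp [Matrix.mul_apply, Fin.sum_univ_two, Matrix.one_apply]
    · linear_combination n1
    · linear_combination o21
    · linear_combination o12
    · linear_combination n2
  · have := Real.arcsin_nonneg.2 ht; linarith
  · have h2 : t ≤ Real.sqrt 2 / 2 := by
      nlinarith [Real.sq_sqrt (by norm_num : (0:ℝ) ≤ 2), Real.sqrt_nonneg 2]
    have harc : Real.arcsin t ≤ Real.pi / 4 := by
      have h3 : Real.arcsin (Real.sqrt 2 / 2) = Real.pi / 4 := by
        rw [← Real.sin_pi_div_four, Real.arcsin_sin (by linarith [Real.pi_pos]) (by linarith [Real.pi_pos])]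
      calc Real.arcsin t ≤ Real.arcsin (Real.sqrt 2 / 2) := Real.monotone_arcsin h2
        _ = Real.pi / 4 := h3
    linarith
  · have hcos : Complex.cos ((Real.arcsin t : ℝ) : ℂ) = (s : ℂ) := by
      rw [← Complex.ofReal_cos, Real.cos_arcsin]
      norm_cast
      rw [show 1 - t^2 = s^2 by linarith, Real.sqrt_sq hs]
    have hsin : Complex.sin ((Real.arcsin t : ℝ) : ℂ) = (t : ℂ) := by
      rw [← Complex.ofReal_sin, Real.sin_arcsin ht1' ht1]
    intro i j
    fin_cases i <;> fin_cases j <;>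
      simp only [Fin.sum_univ_two, Matrix.cons_val', Matrix.cons_val_zero, Matrix.cons_val_one,
        Matrix.head_cons, Matrix.empty_val', Matrix.cons_val_fin_one, Matrix.head_fin_const,
        Fin.zero_eta, Fin.mk_one, ha0, hb, hb', hd1, ha, hd, if_true, and_self] <;>
      norm_num
    · rw [hcos]; linear_combination (starRingEnd ℂ) α * e1 + (starRingEnd ℂ) β * e2 + (s:ℂ) * n1
    · linear_combination (starRingEnd ℂ) α * e3 + (starRingEnd ℂ) β * e4 + (t:ℂ) * o21
    · linear_combination (starRingEnd ℂ) γ * e1 + (starRingEnd ℂ) δ * e2 + (s:ℂ) * o12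
    · rw [hsin]; linear_combination (starRingEnd ℂ) γ * e3 + (starRingEnd ℂ) δ * e4 + (t:ℂ) * n2

theorem stmt4 (Φ : Fin 2 × Fin 2 → ℂ)
    (hsym : ∀ i j : Fin 2, Φ (i, j) = Φ (j, i))
    (hunit : ∑ v : Fin 2 × Fin 2, Complex.normSq (Φ v) = 1) :
    ∃ U : Matrix (Fin 2) (Fin 2) ℂ, U ∈ Matrix.unitaryGroup (Fin 2) ℂ ∧
      ∃ ξ : ℝ, 0 ≤ ξ ∧ ξ ≤ Real.pi/2 ∧
        ∀ i j : Fin 2,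
          (∑ k : Fin 2, ∑ l : Fin 2, U i k * U j l * Φ (k, l)) =
            if i = 0 ∧ j = 0 then (Real.cos (ξ/2) : ℂ)
            else if i = 1 ∧ j = 1 then (Real.sin (ξ/2) : ℂ)
            else 0 := by
  set a : ℂ := Φ (0,0) with ha
  set b : ℂ := Φ (0,1) with hb
  set d : ℂ := Φ (1,1) with hd
  have hb' : Φ (1,0) = b := hsym 1 0
  simp only [Fintype.sum_prod_type, Fin.sum_univ_two] at hunit
  rw [hb'] at hunit
  have hCunit : a * (starRingEnd ℂ) a + 2 * (b * (starRingEnd ℂ) b) + d * (starRingEnd ℂ) d = 1 := by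
    rw [Complex.mul_conj, Complex.mul_conj, Complex.mul_conj]
    exact_mod_cast (by linarith : Complex.normSq a + 2 * Complex.normSq b + Complex.normSq d = (1:ℝ))
  -- Phase A: eigenvector (x, y) of H = M conj(M) with eigenvalue lam ≥ 0
  obtain ⟨lam, x, y, hlam0, hxy0, A1, A2⟩ :
      ∃ (lam : ℝ) (x y : ℂ), 0 ≤ lam ∧ ¬(x = 0 ∧ y = 0) ∧
        (a * (starRingEnd ℂ) a + b * (starRingEnd ℂ) b) * x
          + (a * (starRingEnd ℂ) b + b * (starRingEnd ℂ) d) * y = (lam:ℂ) * x ∧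
        ((starRingEnd ℂ) a * b + (starRingEnd ℂ) b * d) * x
          + (b * (starRingEnd ℂ) b + d * (starRingEnd ℂ) d) * y = (lam:ℂ) * y := by
    set q : ℂ := a * (starRingEnd ℂ) b + b * (starRingEnd ℂ) d with hq
    have hpc : a * (starRingEnd ℂ) a + b * (starRingEnd ℂ) b
        = (((normSq a + normSq b : ℝ)):ℂ) := by
      rw [Complex.mul_conj, Complex.mul_conj]; push_cast; ring
    have hrc : b * (starRingEnd ℂ) b + d * (starRingEnd ℂ) d
        = (((normSq b + normSq d : ℝ)):ℂ) := by
      rw [Complex.mul_conj, Complex.mul_conj]; push_cast; ring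
    by_cases hq0 : q = 0
    · refine ⟨normSq a + normSq b, 1, 0,
        add_nonneg (normSq_nonneg _) (normSq_nonneg _), by simp, ?_, ?_⟩
      · rw [hpc]; ring
      · have hcq : (starRingEnd ℂ) a * b + (starRingEnd ℂ) b * d = 0 := by
          have := congrArg (starRingEnd ℂ) hq0
          simp only [hq, map_add, map_mul, conj_conj, map_zero] at this
          linear_combination this
        rw [hcq]; ring
    · set p : ℝ := normSq a + normSq b with hp
      set r : ℝ := normSq b + normSq d with hr
      have hqpos : 0 < normSq q := normSq_pos.2 hq0
      set D : ℝ := Real.sqrt ((p - r)^2 + 4 * normSq q) with hD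
      have hD2 : D^2 = (p - r)^2 + 4 * normSq q := Real.sq_sqrt (by positivity)
      have hDpos : 0 ≤ D := Real.sqrt_nonneg _
      set lam : ℝ := (p + r + D)/2 with hlam
      have hchar : lam^2 - (p + r) * lam + (p * r - normSq q) = 0 := by
        nlinarith [hD2]
      have hlamnn : 0 ≤ lam := by
        have h0p : (0:ℝ) ≤ p := by rw [hp]; exact add_nonneg (normSq_nonneg _) (normSq_nonneg _)
        have h0r : (0:ℝ) ≤ r := by rw [hr]; exact add_nonneg (normSq_nonneg _) (normSq_nonneg _)
        rw [hlam]; linarith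
      refine ⟨lam, q, (((lam - p : ℝ)):ℂ), hlamnn, ?_, ?_, ?_⟩
      · intro h; exact hq0 h.1
      · rw [hpc]
        push_cast
        ring
      · have hcq : (starRingEnd ℂ) q = (starRingEnd ℂ) a * b + (starRingEnd ℂ) b * d := by
          rw [hq]
          simp only [map_add, map_mul, conj_conj]
        have hcqq : ((starRingEnd ℂ) a * b + (starRingEnd ℂ) b * d) * q
            = ((normSq q : ℝ) : ℂ) := by
          rw [← hcq, mul_comm, Complex.mul_conj]
        rw [hrc, hcqq]
        have : (normSq q : ℝ) + r * (lam - p) = lam * (lam - p) := by nlinarith [hchar]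
        push_cast
        exact_mod_cast congrArg (fun u : ℝ => (u : ℂ)) this
  -- Phase B
  set s : ℝ := Real.sqrt lam with hsdef
  have hs0 : 0 ≤ s := Real.sqrt_nonneg _
  have hs2 : ((s:ℂ))^2 = (lam : ℂ) := by
    norm_cast
    exact Real.sq_sqrt hlam0
  set w₀ : ℂ := a * (starRingEnd ℂ) x + b * (starRingEnd ℂ) y with hw0
  set w₁ : ℂ := b * (starRingEnd ℂ) x + d * (starRingEnd ℂ) y with hw1
  set z₀ : ℂ := (s:ℂ) * x + w₀ with hz0
  set z₁ : ℂ := (s:ℂ) * y + w₁ with hz1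
  have B1 : a * (starRingEnd ℂ) z₀ + b * (starRingEnd ℂ) z₁ = (s:ℂ) * z₀ := by
    rw [hz0, hz1, hw0, hw1]
    simp only [map_add, map_mul, conj_conj, Complex.conj_ofReal]
    linear_combination A1 - x * hs2
  have B2 : b * (starRingEnd ℂ) z₀ + d * (starRingEnd ℂ) z₁ = (s:ℂ) * z₁ := by
    rw [hz0, hz1, hw0, hw1]
    simp only [map_add, map_mul, conj_conj, Complex.conj_ofReal]
    linear_combination A2 - y * hs2
  obtain ⟨α, β, unit1, e1, e2⟩ :
      ∃ α β : ℂ, (α * (starRingEnd ℂ) α + β * (starRingEnd ℂ) β = 1) ∧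
        (a * (starRingEnd ℂ) α + b * (starRingEnd ℂ) β = (s:ℂ) * α) ∧
        (b * (starRingEnd ℂ) α + d * (starRingEnd ℂ) β = (s:ℂ) * β) := by
    by_cases hz : z₀ = 0 ∧ z₁ = 0
    · have h1 : (s:ℂ) * x + (a * (starRingEnd ℂ) x + b * (starRingEnd ℂ) y) = 0 := by
        rw [← hw0, ← hz0]; exact hz.1
      have h2 : (s:ℂ) * y + (b * (starRingEnd ℂ) x + d * (starRingEnd ℂ) y) = 0 := by
        rw [← hw1, ← hz1]; exact hz.2
      apply normHelper a b d (Complex.I * x) (Complex.I * y) s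
      · intro hc
        apply hxy0
        constructor
        · have := hc.1
          simpa [Complex.I_ne_zero] using this
        · have := hc.2
          simpa [Complex.I_ne_zero] using this
      · simp only [map_mul, Complex.conj_I]
        linear_combination (-Complex.I) * h1
      · simp only [map_mul, Complex.conj_I]
        linear_combination (-Complex.I) * h2
    · exact normHelper a b d z₀ z₁ s hz B1 B2
  -- Phase C: second conjugate-eigenvector relations
  set μ : ℂ := a * β^2 - 2 * b * α * β + d * α^2 with hμ
  have e3g : a * β - b * α = μ * (starRingEnd ℂ) β := by
    rw [hμ]
    linear_combination (α*β) * e1 + (-α^2) * e2 + (b*α - a*β) * unit1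
  have e4g : d * α - b * β = μ * (starRingEnd ℂ) α := by
    rw [hμ]
    linear_combination (-β^2) * e1 + (α*β) * e2 + (b*β - d*α) * unit1
  -- Phase D: phase adjustment
  set γ : ℂ := Complex.exp (((Complex.arg μ / 2 : ℝ) : ℂ) * Complex.I) with hγdef
  have hγabs : ‖γ‖ = 1 := Complex.norm_exp_ofReal_mul_I _
  have hγ : γ * (starRingEnd ℂ) γ = 1 := by
    rw [Complex.mul_conj]
    norm_cast
    rw [Complex.normSq_eq_norm_sq, hγabs]
    norm_num
  set t : ℝ := ‖μ‖ with htdef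
  have ht0 : 0 ≤ t := norm_nonneg μ
  have hμγ : μ = (t : ℂ) * γ^2 := by
    have hsq : γ^2 = Complex.exp (((Complex.arg μ : ℝ) : ℂ) * Complex.I) := by
      rw [hγdef, sq, ← Complex.exp_add]
      congr 1
      push_cast
      ring
    rw [hsq, htdef]
    exact (Complex.norm_mul_exp_arg_mul_I μ).symm
  -- e3/e4 for the pair (γ', δ') = (-γ * conj β, γ * conj α)
  have n2 : (-γ * (starRingEnd ℂ) β) * (starRingEnd ℂ) (-γ * (starRingEnd ℂ) β)
      + (γ * (starRingEnd ℂ) α) * (starRingEnd ℂ) (γ * (starRingEnd ℂ) α) = 1 := by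
    simp only [map_mul, map_neg, conj_conj]
    linear_combination (congrArg₂ (· * ·) hγ unit1)
  have o12 : α * (starRingEnd ℂ) (-γ * (starRingEnd ℂ) β)
      + β * (starRingEnd ℂ) (γ * (starRingEnd ℂ) α) = 0 := by
    simp only [map_mul, map_neg, conj_conj]
    ring
  have e3 : a * (starRingEnd ℂ) (-γ * (starRingEnd ℂ) β)
      + b * (starRingEnd ℂ) (γ * (starRingEnd ℂ) α) = (t:ℂ) * (-γ * (starRingEnd ℂ) β) := by
    simp only [map_mul, map_neg, conj_conj]
    linear_combination (-(starRingEnd ℂ) γ) * e3g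
      + (-(starRingEnd ℂ) γ * (starRingEnd ℂ) β) * hμγ
      + (-(t:ℂ) * (starRingEnd ℂ) β * γ) * hγ
  have e4 : b * (starRingEnd ℂ) (-γ * (starRingEnd ℂ) β)
      + d * (starRingEnd ℂ) (γ * (starRingEnd ℂ) α) = (t:ℂ) * (γ * (starRingEnd ℂ) α) := by
    simp only [map_mul, map_neg, conj_conj]
    linear_combination ((starRingEnd ℂ) γ) * e4g
      + ((starRingEnd ℂ) γ * (starRingEnd ℂ) α) * hμγ
      + ((t:ℂ) * (starRingEnd ℂ) α * γ) * hγ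
  -- Phase E: s^2 + t^2 = 1
  have ce1 : (starRingEnd ℂ) a * α + (starRingEnd ℂ) b * β = (s:ℂ) * (starRingEnd ℂ) α := by
    have := congrArg (starRingEnd ℂ) e1
    simpa [map_add, map_mul, conj_conj, Complex.conj_ofReal] using this
  have ce2 : (starRingEnd ℂ) b * α + (starRingEnd ℂ) d * β = (s:ℂ) * (starRingEnd ℂ) β := by
    have := congrArg (starRingEnd ℂ) e2
    simpa [map_add, map_mul, conj_conj, Complex.conj_ofReal] using this
  have ce3g : (starRingEnd ℂ) a * (starRingEnd ℂ) β - (starRingEnd ℂ) b * (starRingEnd ℂ) α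
      = (starRingEnd ℂ) μ * β := by
    have := congrArg (starRingEnd ℂ) e3g
    simpa [map_sub, map_mul, conj_conj] using this
  have ce4g : (starRingEnd ℂ) d * (starRingEnd ℂ) α - (starRingEnd ℂ) b * (starRingEnd ℂ) β
      = (starRingEnd ℂ) μ * α := by
    have := congrArg (starRingEnd ℂ) e4g
    simpa [map_sub, map_mul, conj_conj] using this
  have htμ : ((t:ℂ))^2 = μ * (starRingEnd ℂ) μ := by
    rw [Complex.mul_conj, htdef]
    norm_cast
    rw [Complex.normSq_eq_norm_sq]
  have hsumC : ((s:ℂ))^2 + ((t:ℂ))^2 = 1 := by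
    rw [htμ]
    have p1 := congrArg₂ (· * ·) e1 ce1
    have p2 := congrArg₂ (· * ·) e2 ce2
    have p3 := congrArg₂ (· * ·) e3g ce3g
    have p4 := congrArg₂ (· * ·) e4g ce4g
    linear_combination (-1 : ℂ) * p1 - p2 - p3 - p4
      + (1 - ((s:ℂ)^2 + μ * (starRingEnd ℂ) μ)) * unit1
      + (α * (starRingEnd ℂ) α + β * (starRingEnd ℂ) β) * hCunit
  have hsumR : s^2 + t^2 = 1 := by
    have := hsumC
    push_cast at this
    exact_mod_cast this
  rcases le_total t s with hts | hst
  · exact key Φ a b d α β (-γ * (starRingEnd ℂ) β) (γ * (starRingEnd ℂ) α) s t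
      ha.symm hb.symm hb' hd.symm unit1 n2 o12 e1 e2 e3 e4 ht0 hts hsumR
  · have o21 : (-γ * (starRingEnd ℂ) β) * (starRingEnd ℂ) α
        + (γ * (starRingEnd ℂ) α) * (starRingEnd ℂ) β = 0 := by ring
    exact key Φ a b d (-γ * (starRingEnd ℂ) β) (γ * (starRingEnd ℂ) α) α β t s
      ha.symm hb.symm hb' hd.symm n2 unit1 o21 e3 e4 e1 e2 hs0 hst (by linarith)
end
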